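/- Let α ∈ (1/2,1) and T > 0. There exists a constant C > 0 (depending only on α and T) such that for all t ∈ [0,T] and all 0 < h ≤ 1, ∫_0^t |g^{(h)}(t,u) − 1| du ≤ C h^α. -/

import Mathlib

open MeasureTheory intervalIntegral Real Set

/-- Fractional kernel `K(u) = u^(α-1)/Γ(α)` for `u > 0`, `0` otherwise. -/
noncomputable def Kker (α u : ℝ) : ℝ := if 0 < u then u ^ (α - 1) / Real.Gamma α else 0

/-- First-order resolvent kernel `L(u) = u^(-α)/Γ(1-α)` for `u > 0`, `0` otherwise. -/
noncomputable def Lker (α u : ℝ) : ℝ := if 0 < u then u ^ (-α) / Real.Gamma (1 - α) else 0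

/-- Discretization map `φ_h(t) = h⌊t/h⌋`. -/
noncomputable def phi (h t : ℝ) : ℝ := h * (⌊t / h⌋ : ℝ)

/-- `χ_h(u) = u - φ_h(u)`. -/
noncomputable def chi (h u : ℝ) : ℝ := u - phi h u

/-- Discretized kernel `K^{(h)}`. -/
noncomputable def Kh (α h t s : ℝ) : ℝ :=
  if 0 ≤ s ∧ s < phi h t then Kker α (phi h t - s) else 0

/-- The kernel `g^{(h)}(t,s) = ∫_s^t L(t-v) K^{(h)}(v,s) dv`. -/
noncomputable def gh (α h t s : ℝ) : ℝ := ∫ v in s..t, Lker α (t - v) * Kh α h v s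

section Aux

variable {α h t u v : ℝ}

/-! ### Basic positivity and values -/

lemma Kker_nonneg (hα : 0 < α) (u : ℝ) : 0 ≤ Kker α u := by
  unfold Kker; split
  · have := Real.Gamma_pos_of_pos hα; positivity
  · exact le_rfl

lemma Lker_nonneg (hα : α < 1) (u : ℝ) : 0 ≤ Lker α u := by
  unfold Lker; split
  · have : (0:ℝ) < 1 - α := by linarith
    have := Real.Gamma_pos_of_pos this; positivity
  · exact le_rfl

lemma Kker_of_nonneg (hα : α < 1) (hu : 0 ≤ u) : Kker α u = u ^ (α - 1) / Real.Gamma α := by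
  unfold Kker; rcases eq_or_lt_of_le hu with rfl | hu'
  · rw [if_neg (lt_irrefl _), Real.zero_rpow (by linarith), zero_div]
  · rw [if_pos hu']

lemma Lker_of_nonneg (hα : 0 < α) (hu : 0 ≤ u) : Lker α u = u ^ (-α) / Real.Gamma (1 - α) := by
  unfold Lker; rcases eq_or_lt_of_le hu with rfl | hu'
  · rw [if_neg (lt_irrefl _), Real.zero_rpow (neg_ne_zero.mpr hα.ne'), zero_div]
  · rw [if_pos hu']

lemma Kker_anti (hα0 : 0 < α) (hα1 : α < 1) {x y : ℝ} (hx : 0 < x) (hxy : x ≤ y) :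
    Kker α y ≤ Kker α x := by
  rw [Kker_of_nonneg hα1 hx.le, Kker_of_nonneg hα1 (hx.trans_le hxy).le]
  have hΓ := Real.Gamma_pos_of_pos hα0
  have hx' := Real.rpow_le_rpow_of_nonpos hx hxy (by linarith : α - 1 ≤ 0)
  exact (div_le_div_iff_of_pos_right hΓ).mpr hx'

/-! ### phi facts -/

lemma phi_le (hh : 0 < h) (t : ℝ) : phi h t ≤ t := by
  unfold phi
  calc h * (⌊t / h⌋ : ℝ) ≤ h * (t / h) := by
        exact mul_le_mul_of_nonneg_left (Int.floor_le _) hh.le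
    _ = t := by field_simp

lemma lt_phi_add (hh : 0 < h) (t : ℝ) : t < phi h t + h := by
  unfold phi
  have := Int.lt_floor_add_one (t / h)
  have h2 : t / h * h < ((⌊t / h⌋ : ℝ) + 1) * h := by
    exact mul_lt_mul_of_pos_right this hh
  rw [div_mul_cancel₀ _ hh.ne'] at h2
  nlinarith

lemma phi_nonneg (hh : 0 < h) (ht : 0 ≤ t) : 0 ≤ phi h t := by
  unfold phi
  have : (0:ℤ) ≤ ⌊t / h⌋ := Int.floor_nonneg.mpr (by positivity)
  have : (0:ℝ) ≤ (⌊t / h⌋ : ℝ) := by exact_mod_cast this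
  positivity

lemma phi_grid_sep (hh : 0 < h) (huv : u < phi h v) : phi h u + h ≤ phi h v := by
  unfold phi at *
  have h1 : (⌊u / h⌋ : ℝ) < (⌊v / h⌋ : ℝ) := by
    by_contra hc
    push_neg at hc
    have := mul_le_mul_of_nonneg_left hc hh.le
    have h2 : u < h * (⌊u/h⌋:ℝ) := lt_of_lt_of_le huv this
    have := mul_le_mul_of_nonneg_left (Int.floor_le (u/h)) hh.le
    rw [mul_div_cancel₀] at this
    · linarith
    · exact hh.ne'
  have h2 : (⌊u / h⌋ : ℤ) + 1 ≤ ⌊v / h⌋ := by exact_mod_cast Int.lt_iff_add_one_le.mp (by exact_mod_cast h1)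
  have h3 : ((⌊u / h⌋ : ℝ) + 1) ≤ (⌊v / h⌋ : ℝ) := by exact_mod_cast h2
  nlinarith

end Aux

section Aux2

variable {α h t u v a b : ℝ}

/-! ### Measurability -/

lemma measurable_Kker : Measurable (Kker α) := by
  unfold Kker
  exact Measurable.ite (measurableSet_lt measurable_const measurable_id)
    ((measurable_id.pow_const _).div_const _) measurable_const

lemma measurable_Lker : Measurable (Lker α) := by
  unfold Lker
  exact Measurable.ite (measurableSet_lt measurable_const measurable_id)
    ((measurable_id.pow_const _).div_const _) measurable_const

lemma measurable_phi : Measurable (phi h) := by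
  unfold phi
  exact measurable_const.mul ((measurable_from_top (f := (Int.cast : ℤ → ℝ))).comp
    (Int.measurable_floor.comp (measurable_id.div_const h)))

lemma measurable_Kh_pair : Measurable (fun p : ℝ × ℝ => Kh α h p.1 p.2) := by
  unfold Kh
  exact Measurable.ite
    ((measurableSet_le measurable_const measurable_snd).inter
      (measurableSet_lt measurable_snd (measurable_phi.comp measurable_fst)))
    (measurable_Kker.comp ((measurable_phi.comp measurable_fst).sub measurable_snd))
    measurable_const

lemma measurable_Kh_left : Measurable (fun v => Kh α h v u) :=
  measurable_Kh_pair.comp (measurable_id.prodMk measurable_const)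

lemma measurable_Kh_right : Measurable (fun s => Kh α h v s) :=
  measurable_Kh_pair.comp (measurable_const.prodMk measurable_id)

/-! ### Integrability -/

lemma intervalIntegrable_Kker (hα0 : 0 < α) (ha : 0 ≤ a) (hb : 0 ≤ b) :
    IntervalIntegrable (Kker α) volume a b := by
  have base : IntervalIntegrable (fun x : ℝ => x ^ (α - 1) / Real.Gamma α) volume a b :=
    (intervalIntegrable_rpow' (by linarith)).div_const _
  rw [intervalIntegrable_iff] at base ⊢
  refine base.congr_fun ?_ measurableSet_uIoc
  intro x hx
  rw [Set.uIoc] at hx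
  have hx0 : 0 < x := lt_of_le_of_lt (le_min ha hb) hx.1
  simp [Kker, hx0]

lemma intervalIntegrable_Lker (hα1 : α < 1) (ha : 0 ≤ a) (hb : 0 ≤ b) :
    IntervalIntegrable (Lker α) volume a b := by
  have base : IntervalIntegrable (fun x : ℝ => x ^ (-α) / Real.Gamma (1 - α)) volume a b :=
    (intervalIntegrable_rpow' (by linarith)).div_const _
  rw [intervalIntegrable_iff] at base ⊢
  refine base.congr_fun ?_ measurableSet_uIoc
  intro x hx
  rw [Set.uIoc] at hx
  have hx0 : 0 < x := lt_of_le_of_lt (le_min ha hb) hx.1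
  simp [Lker, hx0]

lemma intervalIntegrable_Lker_comp (hα1 : α < 1) (hat : a ≤ t) :
    IntervalIntegrable (fun v => Lker α (t - v)) volume a t := by
  have := (intervalIntegrable_Lker (α := α) hα1 (le_refl 0) (by linarith : (0:ℝ) ≤ t - a)).comp_sub_left t
  simpa using this.symm

lemma intervalIntegrable_Kker_comp (hα0 : 0 < α) (hua : u ≤ a) (hub : u ≤ b) :
    IntervalIntegrable (fun v => Kker α (v - u)) volume a b := by
  have := (intervalIntegrable_Kker (α := α) hα0 (by linarith : (0:ℝ) ≤ a - u)
    (by linarith : (0:ℝ) ≤ b - u)).comp_sub_right u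
  simpa using this

/-! ### Integral values -/

lemma integral_Kker (hα0 : 0 < α) (hα1 : α < 1) (ha : 0 ≤ a) (hb : 0 ≤ b) :
    ∫ x in a..b, Kker α x = (b ^ α - a ^ α) / (α * Real.Gamma α) := by
  have heq : Set.EqOn (Kker α) (fun x : ℝ => x ^ (α - 1) / Real.Gamma α) (Set.uIcc a b) := by
    intro x hx
    have hx0 : 0 ≤ x := le_trans (le_min ha hb) hx.1
    exact Kker_of_nonneg hα1 hx0
  rw [intervalIntegral.integral_congr heq]
  rw [intervalIntegral.integral_div]
  rw [integral_rpow (Or.inl (by linarith))]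
  rw [sub_add_cancel]
  rw [div_div]

lemma integral_Lker (hα0 : 0 < α) (hα1 : α < 1) (ha : 0 ≤ a) (hb : 0 ≤ b) :
    ∫ x in a..b, Lker α x = (b ^ (1 - α) - a ^ (1 - α)) / ((1 - α) * Real.Gamma (1 - α)) := by
  have heq : Set.EqOn (Lker α) (fun x : ℝ => x ^ (-α) / Real.Gamma (1 - α)) (Set.uIcc a b) := by
    intro x hx
    have hx0 : 0 ≤ x := le_trans (le_min ha hb) hx.1
    exact Lker_of_nonneg hα0 hx0
  rw [intervalIntegral.integral_congr heq]
  rw [intervalIntegral.integral_div]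
  rw [integral_rpow (Or.inl (by linarith))]
  have : -α + 1 = 1 - α := by ring
  rw [this, div_div]

end Aux2

section Aux3

variable {α h t u : ℝ}

lemma beta_special (hα0 : 0 < α) (hα1 : α < 1) :
    (∫ x in (0:ℝ)..1, x ^ (α - 1) * (1 - x) ^ (-α)) = Real.Gamma α * Real.Gamma (1 - α) := by
  have h1 : (0:ℝ) < 1 - α := by linarith
  have hc := Complex.Gamma_mul_Gamma_eq_betaIntegral (s := (α:ℂ)) (t := ((1-α : ℝ):ℂ))
    (by simpa using hα0) (by simpa using h1)
  rw [Complex.betaIntegral] at hc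
  have heq : Set.EqOn (fun x : ℝ => (x:ℂ) ^ ((α:ℂ) - 1) * ((1:ℂ) - x) ^ (((1-α:ℝ):ℂ) - 1))
      (fun x : ℝ => ((x ^ (α - 1) * (1 - x) ^ (-α) : ℝ) : ℂ)) (Set.uIcc (0:ℝ) 1) := by
    intro x hx
    rw [Set.uIcc_of_le (by norm_num)] at hx
    obtain ⟨hx0, hx1⟩ := hx
    simp only [Complex.ofReal_mul, Complex.ofReal_cpow hx0,
      Complex.ofReal_cpow (by linarith : (0:ℝ) ≤ 1 - x)]
    push_cast
    ring_nf
  rw [intervalIntegral.integral_congr heq, intervalIntegral.integral_ofReal] at hc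
  have hone : Complex.Gamma ((α:ℂ) + ((1-α:ℝ):ℂ)) = 1 := by
    push_cast; norm_num [Complex.Gamma_one]
  rw [hone, one_mul] at hc
  rw [Complex.Gamma_ofReal, Complex.Gamma_ofReal, ← Complex.ofReal_mul] at hc
  exact_mod_cast hc.symm

lemma resolvent_id (hα0 : 0 < α) (hα1 : α < 1) (hut : u < t) :
    ∫ v in u..t, Lker α (t - v) * Kker α (v - u) = 1 := by
  have hΓα := Real.Gamma_pos_of_pos hα0
  have hΓ1α := Real.Gamma_pos_of_pos (by linarith : (0:ℝ) < 1 - α)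
  have htu : (0:ℝ) < t - u := by linarith
  set c := Real.Gamma α * Real.Gamma (1 - α) with hc
  have hcpos : 0 < c := by positivity
  have heq : Set.EqOn (fun v => Lker α (t - v) * Kker α (v - u))
      (fun v => (t - v) ^ (-α) * (v - u) ^ (α - 1) / c) (Set.uIcc u t) := by
    intro v hv
    rw [Set.uIcc_of_le hut.le] at hv
    obtain ⟨hv1, hv2⟩ := hv
    dsimp only
    rw [Lker_of_nonneg hα0 (by linarith), Kker_of_nonneg hα1 (by linarith),
      div_mul_div_comm, mul_comm (Real.Gamma (1 - α)) (Real.Gamma α)]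
  rw [intervalIntegral.integral_congr heq]
  simp only [intervalIntegral.integral_div]
  -- substitution v = (t-u)*x + u
  have hsub := intervalIntegral.integral_comp_mul_add
    (f := fun v => (t - v) ^ (-α) * (v - u) ^ (α - 1)) (a := (0:ℝ)) (b := 1) htu.ne' u
  simp only [mul_zero, zero_add, mul_one] at hsub
  have hb2 : t - u + u = t := by ring
  rw [hb2] at hsub
  -- now rewrite the 0..1 integral
  have heq2 : Set.EqOn (fun x : ℝ => (t - ((t-u) * x + u)) ^ (-α) * ((t-u) * x + u - u) ^ (α - 1))
      (fun x : ℝ => ((t-u) ^ (-α) * (t-u) ^ (α - 1)) * (x ^ (α - 1) * (1 - x) ^ (-α)))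
      (Set.uIcc (0:ℝ) 1) := by
    intro x hx
    rw [Set.uIcc_of_le (by norm_num)] at hx
    obtain ⟨hx0, hx1⟩ := hx
    dsimp only
    have e1 : t - ((t-u) * x + u) = (t-u) * (1-x) := by ring
    have e2 : (t-u) * x + u - u = (t-u) * x := by ring
    rw [e1, e2, Real.mul_rpow htu.le (by linarith), Real.mul_rpow htu.le hx0]
    ring
  rw [intervalIntegral.integral_congr heq2, intervalIntegral.integral_const_mul,
    beta_special hα0 hα1] at hsub
  have hp : (t-u) ^ (-α) * (t-u) ^ (α - 1) = (t-u)⁻¹ := by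
    rw [← Real.rpow_add htu]
    have he : -α + (α - 1) = -1 := by ring
    rw [he, Real.rpow_neg_one]
  rw [hp] at hsub
  have hI : ∫ x in u..t, (t - x) ^ (-α) * (x - u) ^ (α - 1) = c := by
    have := hsub.symm
    rw [smul_eq_mul] at this
    field_simp at this
    linarith
  rw [hI]
  field_simp

end Aux3

section Aux4

variable {α h t u : ℝ}

lemma Kh_nonneg (hα0 : 0 < α) (v s : ℝ) : 0 ≤ Kh α h v s := by
  unfold Kh; split
  · exact Kker_nonneg hα0 _
  · exact le_rfl

lemma Kh_le (hα0 : 0 < α) (hα1 : α < 1) (hh : 0 < h) (hu : 0 ≤ u) (v : ℝ) :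
    Kh α h v u ≤ Kker α (phi h u + h - u) := by
  have hδ : 0 < phi h u + h - u := by have := lt_phi_add hh u; linarith
  unfold Kh
  split
  · next hcond =>
    have hsep := phi_grid_sep hh hcond.2
    exact Kker_anti hα0 hα1 hδ (by linarith)
  · exact Kker_nonneg hα0 _

lemma intervalIntegrable_L_Kh (hα0 : 0 < α) (hα1 : α < 1) (hh : 0 < h) (hu : 0 ≤ u)
    (hut : u ≤ t) : IntervalIntegrable (fun v => Lker α (t - v) * Kh α h v u) volume u t := by
  have hL : IntervalIntegrable (fun v => Lker α (t - v)) volume u t :=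
    intervalIntegrable_Lker_comp hα1 hut
  rw [intervalIntegrable_iff_integrableOn_Ioc_of_le hut] at hL ⊢
  have hmeas : AEStronglyMeasurable (fun v => Kh α h v u)
      (volume.restrict (Set.Ioc u t)) :=
    (measurable_Kh_left (α := α) (h := h) (u := u)).aestronglyMeasurable
  have hbd : ∀ v : ℝ, ‖Kh α h v u‖ ≤ Kker α (phi h u + h - u) := by
    intro v
    rw [Real.norm_eq_abs, abs_of_nonneg (Kh_nonneg hα0 _ _)]
    exact Kh_le hα0 hα1 hh hu v
  have hprod := hL.bdd_mul hmeas (Filter.Eventually.of_forall hbd)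
  exact IntegrableOn.congr_fun hprod (fun v _ => mul_comm _ _) measurableSet_Ioc

lemma intervalIntegrable_L_K (hα0 : 0 < α) (hα1 : α < 1) (hut : u < t) :
    IntervalIntegrable (fun v => Lker α (t - v) * Kker α (v - u)) volume u t := by
  set m := (u + t) / 2 with hm
  have hum : u < m := by simp [hm]; linarith
  have hmt : m < t := by simp [hm]; linarith
  have hΓ1α := Real.Gamma_pos_of_pos (by linarith : (0:ℝ) < 1 - α)
  -- piece 1 : (u, m] : Kker integrable, Lker bounded
  have p1 : IntervalIntegrable (fun v => Lker α (t - v) * Kker α (v - u)) volume u m := by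
    have hK : IntervalIntegrable (fun v => Kker α (v - u)) volume u m :=
      intervalIntegrable_Kker_comp hα0 le_rfl hum.le
    rw [intervalIntegrable_iff_integrableOn_Ioc_of_le hum.le] at hK ⊢
    have hmeas : AEStronglyMeasurable (fun v => Lker α (t - v))
        (volume.restrict (Set.Ioc u m)) :=
      (measurable_Lker.comp (measurable_const.sub measurable_id)).aestronglyMeasurable
    have hbd : ∀ v ∈ Set.Ioc u m, ‖Lker α (t - v)‖ ≤ (t - m) ^ (-α) / Real.Gamma (1 - α) := by
      intro v hv
      rw [Real.norm_eq_abs, abs_of_nonneg (Lker_nonneg hα1 _),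
        Lker_of_nonneg hα0 (by linarith [hv.2] : (0:ℝ) ≤ t - v)]
      have h1 : (0:ℝ) < t - m := by linarith
      have h2 : t - m ≤ t - v := by linarith [hv.2]
      exact div_le_div_of_nonneg_right (Real.rpow_le_rpow_of_nonpos h1 h2 (by linarith)) hΓ1α.le
    exact hK.bdd_mul (c := (t - m) ^ (-α) / Real.Gamma (1 - α)) hmeas
      ((ae_restrict_iff' measurableSet_Ioc).mpr (Filter.Eventually.of_forall hbd))
  -- piece 2 : (m, t] : Lker integrable, Kker bounded
  have p2 : IntervalIntegrable (fun v => Lker α (t - v) * Kker α (v - u)) volume m t := by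
    have hL : IntervalIntegrable (fun v => Lker α (t - v)) volume m t :=
      intervalIntegrable_Lker_comp hα1 hmt.le
    rw [intervalIntegrable_iff_integrableOn_Ioc_of_le hmt.le] at hL ⊢
    have hmeas : AEStronglyMeasurable (fun v => Kker α (v - u))
        (volume.restrict (Set.Ioc m t)) :=
      (measurable_Kker.comp (measurable_id.sub measurable_const)).aestronglyMeasurable
    have hbd : ∀ v ∈ Set.Ioc m t, ‖Kker α (v - u)‖ ≤ Kker α (m - u) := by
      intro v hv
      rw [Real.norm_eq_abs, abs_of_nonneg (Kker_nonneg hα0 _)]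
      exact Kker_anti hα0 hα1 (by linarith) (by linarith [hv.1])
    have hprod := hL.bdd_mul (c := Kker α (m - u)) hmeas
      ((ae_restrict_iff' measurableSet_Ioc).mpr (Filter.Eventually.of_forall hbd))
    exact IntegrableOn.congr_fun hprod (fun v _ => mul_comm _ _) measurableSet_Ioc
  exact p1.trans p2

lemma pointwise_bound (hα0 : 0 < α) (hα1 : α < 1) (hh : 0 < h) (hu : 0 ≤ u) (hut : u < t) :
    |gh α h t u - 1| ≤ ∫ v in u..t, Lker α (t - v) * |Kh α h v u - Kker α (v - u)| := by
  have hKh := intervalIntegrable_L_Kh hα0 hα1 hh hu hut.le (t := t)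
  have hK := intervalIntegrable_L_K hα0 hα1 hut (t := t)
  have hgh : gh α h t u - 1
      = ∫ v in u..t, (Lker α (t - v) * Kh α h v u - Lker α (t - v) * Kker α (v - u)) := by
    rw [intervalIntegral.integral_sub hKh hK, ← resolvent_id hα0 hα1 hut]
    rfl
  rw [hgh]
  calc |∫ v in u..t, (Lker α (t - v) * Kh α h v u - Lker α (t - v) * Kker α (v - u))|
      ≤ ∫ v in u..t, |Lker α (t - v) * Kh α h v u - Lker α (t - v) * Kker α (v - u)| :=
        intervalIntegral.abs_integral_le_integral_abs hut.le
    _ = ∫ v in u..t, Lker α (t - v) * |Kh α h v u - Kker α (v - u)| := by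
        apply intervalIntegral.integral_congr
        intro v _
        dsimp only
        rw [← mul_sub, abs_mul, abs_of_nonneg (Lker_nonneg hα1 _)]

end Aux4

section Aux5

variable {α h v : ℝ}

lemma rpow_subadd {a b p : ℝ} (ha : 0 ≤ a) (hb : 0 ≤ b) (hp0 : 0 ≤ p) (hp1 : p ≤ 1) :
    (a + b) ^ p ≤ a ^ p + b ^ p := by
  have key := NNReal.rpow_add_le_add_rpow (Real.toNNReal a) (Real.toNNReal b) hp0 hp1
  have := NNReal.coe_le_coe.mpr key
  rw [NNReal.coe_add] at this
  rw [NNReal.coe_rpow, NNReal.coe_rpow, NNReal.coe_rpow] at this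
  rw [NNReal.coe_add, Real.coe_toNNReal a ha, Real.coe_toNNReal b hb] at this
  exact this

lemma inner_bound (hα0 : 0 < α) (hα1 : α < 1) (hh : 0 < h) (hv : 0 < v) :
    ∫⁻ u in Set.Ioc 0 v, ENNReal.ofReal |Kh α h v u - Kker α (v - u)|
      ≤ ENNReal.ofReal (2 * h ^ α / (α * Real.Gamma α)) := by
  have hΓα := Real.Gamma_pos_of_pos hα0
  set φ := phi h v with hφdef
  have hφ0 : 0 ≤ φ := phi_nonneg hh hv.le
  have hφv : φ ≤ v := phi_le hh v
  have hχh : v - φ ≤ h := by have := lt_phi_add hh v; linarith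
  set Δ : ℝ → ℝ := fun u => |Kh α h v u - Kker α (v - u)| with hΔdef
  set g1 : ℝ → ℝ := fun u => Kker α (φ - u) - Kker α (v - u) with hg1def
  -- key pointwise identity on Ioo 0 φ
  have hIoo : ∀ u ∈ Set.Ioo 0 φ, Δ u = g1 u := by
    intro u hu
    have hKh : Kh α h v u = Kker α (φ - u) := by
      unfold Kh
      rw [if_pos ⟨hu.1.le, hu.2⟩]
    have hle : Kker α (v - u) ≤ Kker α (φ - u) :=
      Kker_anti hα0 hα1 (by linarith [hu.2] : (0:ℝ) < φ - u) (by linarith)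
    simp only [hΔdef, hg1def, hKh]
    rw [abs_of_nonneg (by linarith)]
  -- integrability of g1 on [0, φ]
  have hA : IntervalIntegrable (fun u => Kker α (φ - u)) volume 0 φ := by
    have := (intervalIntegrable_Kker (α := α) hα0 hφ0 le_rfl).comp_sub_left φ
    simpa using this
  have hB : IntervalIntegrable (fun u => Kker α (v - u)) volume 0 φ := by
    have := (intervalIntegrable_Kker (α := α) hα0 hv.le (by linarith : (0:ℝ) ≤ v - φ)).comp_sub_left v
    simpa using this
  have g1int : IntervalIntegrable g1 volume 0 φ := hA.sub hB
  -- a.e. equality on Ioc 0 φ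
  have hφae : ∀ᵐ (u : ℝ), u ≠ φ := by
    rw [MeasureTheory.ae_iff]
    have hset : {x : ℝ | ¬ x ≠ φ} = {φ} := by ext x; simp
    rw [hset]
    exact Real.volume_singleton
  have hae1 : ∀ᵐ u ∂(volume.restrict (Set.Ioc 0 φ)), Δ u = g1 u := by
    filter_upwards [ae_restrict_mem measurableSet_Ioc, ae_restrict_of_ae hφae] with u hu hne
    exact hIoo u ⟨hu.1, lt_of_le_of_ne hu.2 hne⟩
  have i1 : IntervalIntegrable Δ volume 0 φ := by
    rw [intervalIntegrable_iff_integrableOn_Ioc_of_le hφ0] at g1int ⊢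
    exact g1int.congr (hae1.mono fun u hu => hu.symm)
  -- value on [0, φ]
  have I1val : ∫ u in (0:ℝ)..φ, Δ u
      = φ ^ α / (α * Real.Gamma α) - (v ^ α - (v - φ) ^ α) / (α * Real.Gamma α) := by
    have hcongr : ∫ u in (0:ℝ)..φ, Δ u = ∫ u in (0:ℝ)..φ, g1 u := by
      apply intervalIntegral.integral_congr_ae
      filter_upwards [hφae] with u hne hu
      rw [Set.uIoc_of_le hφ0] at hu
      exact hIoo u ⟨hu.1, lt_of_le_of_ne hu.2 hne⟩
    rw [hcongr, hg1def]
    rw [intervalIntegral.integral_sub hA hB]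
    rw [intervalIntegral.integral_comp_sub_left (Kker α) φ]
    rw [intervalIntegral.integral_comp_sub_left (Kker α) v]
    simp only [sub_zero, sub_self]
    rw [integral_Kker hα0 hα1 le_rfl hφ0, integral_Kker hα0 hα1 (by linarith) hv.le]
    rw [Real.zero_rpow hα0.ne']
    ring
  -- piece on [φ, v]
  have e2 : Set.EqOn Δ (fun u => Kker α (v - u)) (Set.uIcc φ v) := by
    intro u hu
    rw [Set.uIcc_of_le hφv] at hu
    have hKh : Kh α h v u = 0 := by
      unfold Kh
      rw [if_neg]
      rintro ⟨-, hlt⟩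
      exact absurd hlt (not_lt.mpr hu.1)
    simp only [hΔdef, hKh, zero_sub, abs_neg]
    exact abs_of_nonneg (Kker_nonneg hα0 _)
  have hC : IntervalIntegrable (fun u => Kker α (v - u)) volume φ v := by
    have := (intervalIntegrable_Kker (α := α) hα0 (by linarith : (0:ℝ) ≤ v - φ) le_rfl).comp_sub_left v
    simpa using this
  have i2 : IntervalIntegrable Δ volume φ v := by
    rw [intervalIntegrable_iff_integrableOn_Ioc_of_le hφv] at hC ⊢
    refine hC.congr_fun (fun u hu => ?_) measurableSet_Ioc
    have hu' : u ∈ Set.uIcc φ v := by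
      rw [Set.uIcc_of_le hφv]
      exact Set.Ioc_subset_Icc_self hu
    exact (e2 hu').symm
  have I2val : ∫ u in φ..v, Δ u = (v - φ) ^ α / (α * Real.Gamma α) := by
    rw [intervalIntegral.integral_congr e2]
    rw [intervalIntegral.integral_comp_sub_left (Kker α) v]
    simp only [sub_self]
    rw [integral_Kker hα0 hα1 le_rfl (by linarith)]
    rw [Real.zero_rpow hα0.ne']
    ring
  -- total
  have itot : IntervalIntegrable Δ volume 0 v := i1.trans i2
  have Jval : ∫ u in (0:ℝ)..v, Δ u
      = (φ ^ α - v ^ α + 2 * (v - φ) ^ α) / (α * Real.Gamma α) := by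
    rw [← intervalIntegral.integral_add_adjacent_intervals i1 i2, I1val, I2val]
    ring
  have Jbound : ∫ u in (0:ℝ)..v, Δ u ≤ 2 * h ^ α / (α * Real.Gamma α) := by
    rw [Jval]
    have hsub : φ ^ α ≤ v ^ α := Real.rpow_le_rpow hφ0 hφv hα0.le
    have hχα : (v - φ) ^ α ≤ h ^ α :=
      Real.rpow_le_rpow (by linarith) hχh hα0.le
    have hnum : φ ^ α - v ^ α + 2 * (v - φ) ^ α ≤ 2 * h ^ α := by linarith
    have hden : (0:ℝ) < α * Real.Gamma α := by positivity
    exact (div_le_div_iff_of_pos_right hden).mpr hnum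
  -- conclusion via lintegral
  have hint : IntegrableOn Δ (Set.Ioc 0 v) volume := by
    rwa [intervalIntegrable_iff_integrableOn_Ioc_of_le hv.le] at itot
  have hofReal : ENNReal.ofReal (∫ u in Set.Ioc 0 v, Δ u)
      = ∫⁻ u in Set.Ioc 0 v, ENNReal.ofReal (Δ u) :=
    MeasureTheory.ofReal_integral_eq_lintegral_ofReal hint
      (Filter.Eventually.of_forall (fun u => abs_nonneg _))
  rw [← hofReal]
  apply ENNReal.ofReal_le_ofReal
  rwa [← intervalIntegral.integral_of_le hv.le]

end Aux5

section Aux6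

variable {α h t : ℝ}

lemma ae_ne_const (c : ℝ) : ∀ᵐ (u : ℝ), u ≠ c := by
  rw [MeasureTheory.ae_iff]
  have hset : {x : ℝ | ¬ x ≠ c} = {c} := by ext x; simp
  rw [hset]
  exact Real.volume_singleton

lemma lint_L (hα0 : 0 < α) (hα1 : α < 1) (ht : 0 ≤ t) :
    ∫⁻ v in Set.Ioc 0 t, ENNReal.ofReal (Lker α (t - v))
      = ENNReal.ofReal (t ^ (1 - α) / ((1 - α) * Real.Gamma (1 - α))) := by
  have hint : IntegrableOn (fun v => Lker α (t - v)) (Set.Ioc 0 t) volume := by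
    have := intervalIntegrable_Lker_comp (α := α) hα1 (a := 0) ht
    rwa [intervalIntegrable_iff_integrableOn_Ioc_of_le ht] at this
  rw [← MeasureTheory.ofReal_integral_eq_lintegral_ofReal hint
    (Filter.Eventually.of_forall (fun v => Lker_nonneg hα1 _))]
  congr 1
  rw [← intervalIntegral.integral_of_le ht]
  rw [intervalIntegral.integral_comp_sub_left (Lker α) t]
  simp only [sub_zero, sub_self]
  rw [integral_Lker hα0 hα1 le_rfl ht]
  rw [Real.zero_rpow (by linarith : (1:ℝ) - α ≠ 0)]
  ring

end Aux6

/-- `L¹` bound `∫_0^t |g^{(h)}(t,u) − 1| du ≤ C h^α` (Lemma 3.4, eq. (3.10)). -/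
theorem gh_sub_one_L1_bound (α T : ℝ) (hα : α ∈ Set.Ioo (1/2 : ℝ) 1) (hT : 0 < T) :
    ∃ C > 0, ∀ t h : ℝ, 0 ≤ t → t ≤ T → 0 < h → h ≤ 1 →
      (∫ u in (0:ℝ)..t, |gh α h t u - 1|) ≤ C * h ^ α := by
  obtain ⟨hα2, hα1⟩ := hα
  have hα0 : 0 < α := by linarith
  have hΓα := Real.Gamma_pos_of_pos hα0
  have h1α : (0:ℝ) < 1 - α := by linarith
  have hΓ1α := Real.Gamma_pos_of_pos h1α
  set M : ℝ := (max T 1) ^ (1 - α) / ((1 - α) * Real.Gamma (1 - α)) with hMdef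
  have hM : 0 < M := by positivity
  set C : ℝ := M * (2 / (α * Real.Gamma α)) with hCdef
  have hC : 0 < C := by positivity
  refine ⟨C, hC, ?_⟩
  intro t h ht0 htT hh0 hh1
  have hCh : 0 ≤ C * h ^ α := by positivity
  by_cases hti : IntervalIntegrable (fun u => |gh α h t u - 1|) volume 0 t
  swap
  · rw [intervalIntegral.integral_undef hti]; exact hCh
  rcases eq_or_lt_of_le ht0 with rfl | ht0'
  · simp only [intervalIntegral.integral_same]; exact hCh
  -- abbreviations
  set Δ' : ℝ → ℝ → ℝ := fun u v => |Kh α h v u - Kker α (v - u)| with hΔ'def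
  set F : ℝ → ℝ → ENNReal := fun u v =>
    if u < v ∧ 0 < u ∧ v ≤ t then ENNReal.ofReal (Lker α (t - v) * Δ' u v) else 0 with hFdef
  have hFmeas : Measurable (fun p : ℝ × ℝ => F p.1 p.2) := by
    apply Measurable.ite
    · exact ((measurableSet_lt measurable_fst measurable_snd).inter
        ((measurableSet_lt measurable_const measurable_fst).inter
          (measurableSet_le measurable_snd measurable_const)))
    · apply Measurable.ennreal_ofReal
      apply Measurable.mul
      · exact measurable_Lker.comp (measurable_const.sub measurable_snd)
      · exact ((measurable_Kh_pair.comp (measurable_snd.prodMk measurable_fst)).sub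
          (measurable_Kker.comp (measurable_snd.sub measurable_fst))).abs
    · exact measurable_const
  -- step 1 : pointwise bound
  have step1 : ∫⁻ u in Set.Ioc 0 t, ENNReal.ofReal |gh α h t u - 1|
      ≤ ∫⁻ u in Set.Ioc 0 t, ∫⁻ v in Set.Ioc u t, ENNReal.ofReal (Lker α (t - v) * Δ' u v) := by
    apply MeasureTheory.lintegral_mono_ae
    filter_upwards [ae_restrict_mem measurableSet_Ioc, ae_restrict_of_ae (ae_ne_const t)]
      with u hu hne
    have hut : u < t := lt_of_le_of_ne hu.2 hne
    have hpb := pointwise_bound hα0 hα1 hh0 hu.1.le hut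
    have hint2 : IntegrableOn (fun v => Lker α (t - v) * Δ' u v) (Set.Ioc u t) volume := by
      have hii := ((intervalIntegrable_L_Kh hα0 hα1 hh0 hu.1.le hut.le).sub
        (intervalIntegrable_L_K hα0 hα1 hut)).abs
      rw [intervalIntegrable_iff_integrableOn_Ioc_of_le hut.le] at hii
      refine hii.congr_fun (fun v _ => ?_) measurableSet_Ioc
      simp only [hΔ'def]
      rw [← mul_sub, abs_mul, abs_of_nonneg (Lker_nonneg hα1 _)]
    have heqR : ENNReal.ofReal (∫ v in u..t, Lker α (t - v) * Δ' u v)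
        = ∫⁻ v in Set.Ioc u t, ENNReal.ofReal (Lker α (t - v) * Δ' u v) := by
      rw [intervalIntegral.integral_of_le hut.le]
      exact MeasureTheory.ofReal_integral_eq_lintegral_ofReal hint2
        (Filter.Eventually.of_forall (fun v =>
          mul_nonneg (Lker_nonneg hα1 _) (abs_nonneg _)))
    calc ENNReal.ofReal |gh α h t u - 1|
        ≤ ENNReal.ofReal (∫ v in u..t, Lker α (t - v) * Δ' u v) :=
          ENNReal.ofReal_le_ofReal hpb
      _ = _ := heqR
  -- step 2 : to full double lintegral
  have step2 : ∫⁻ u in Set.Ioc 0 t, ∫⁻ v in Set.Ioc u t, ENNReal.ofReal (Lker α (t - v) * Δ' u v)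
      = ∫⁻ u, ∫⁻ v, F u v := by
    rw [← MeasureTheory.lintegral_indicator measurableSet_Ioc]
    apply MeasureTheory.lintegral_congr
    intro u
    by_cases hu : u ∈ Set.Ioc 0 t
    · rw [Set.indicator_of_mem hu]
      have : (fun v => F u v)
          = (Set.Ioc u t).indicator (fun v => ENNReal.ofReal (Lker α (t - v) * Δ' u v)) := by
        funext v
        by_cases hv : v ∈ Set.Ioc u t
        · rw [Set.indicator_of_mem hv, hFdef]
          exact if_pos ⟨hv.1, hu.1, hv.2⟩
        · rw [Set.indicator_of_notMem hv, hFdef]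
          refine if_neg ?_
          rintro ⟨h1, -, h3⟩
          exact hv ⟨h1, h3⟩
      rw [this, MeasureTheory.lintegral_indicator measurableSet_Ioc]
    · rw [Set.indicator_of_notMem hu]
      have : ∀ v, F u v = 0 := by
        intro v
        rw [hFdef]
        refine if_neg ?_
        rintro ⟨h1, h2, h3⟩
        exact hu ⟨h2, le_of_lt (lt_of_lt_of_le h1 h3)⟩
      simp [this]
  -- step 3 : swap
  have step3 : ∫⁻ u, ∫⁻ v, F u v = ∫⁻ v, ∫⁻ u, F u v :=
    MeasureTheory.lintegral_lintegral_swap hFmeas.aemeasurable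
  -- step 4 : back to nested set lintegrals
  have step4 : ∫⁻ v, ∫⁻ u, F u v
      = ∫⁻ v in Set.Ioc 0 t, ∫⁻ u in Set.Ioo 0 v, ENNReal.ofReal (Lker α (t - v) * Δ' u v) := by
    rw [← MeasureTheory.lintegral_indicator measurableSet_Ioc]
    apply MeasureTheory.lintegral_congr
    intro v
    by_cases hv : v ∈ Set.Ioc 0 t
    · rw [Set.indicator_of_mem hv]
      have : (fun u => F u v)
          = (Set.Ioo 0 v).indicator (fun u => ENNReal.ofReal (Lker α (t - v) * Δ' u v)) := by
        funext u
        by_cases hu : u ∈ Set.Ioo 0 v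
        · rw [Set.indicator_of_mem hu, hFdef]
          exact if_pos ⟨hu.2, hu.1, hv.2⟩
        · rw [Set.indicator_of_notMem hu, hFdef]
          refine if_neg ?_
          rintro ⟨h1, h2, -⟩
          exact hu ⟨h2, h1⟩
      rw [this, MeasureTheory.lintegral_indicator measurableSet_Ioo]
    · rw [Set.indicator_of_notMem hv]
      have : ∀ u, F u v = 0 := by
        intro u
        rw [hFdef]
        refine if_neg ?_
        rintro ⟨h1, h2, h3⟩
        exact hv ⟨lt_trans h2 h1, h3⟩
      simp [this]
  -- step 5 : inner bound
  have step5 : ∫⁻ v in Set.Ioc 0 t, ∫⁻ u in Set.Ioo 0 v, ENNReal.ofReal (Lker α (t - v) * Δ' u v)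
      ≤ ∫⁻ v in Set.Ioc 0 t,
          ENNReal.ofReal (Lker α (t - v)) * ENNReal.ofReal (2 * h ^ α / (α * Real.Gamma α)) := by
    apply MeasureTheory.lintegral_mono_ae
    filter_upwards [ae_restrict_mem measurableSet_Ioc] with v hv
    have hmeasΔ : Measurable (fun u => ENNReal.ofReal (Δ' u v)) := by
      apply Measurable.ennreal_ofReal
      exact (measurable_Kh_right.sub
        (measurable_Kker.comp (measurable_const.sub measurable_id))).abs
    calc ∫⁻ u in Set.Ioo 0 v, ENNReal.ofReal (Lker α (t - v) * Δ' u v)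
        = ∫⁻ u in Set.Ioo 0 v, ENNReal.ofReal (Lker α (t - v)) * ENNReal.ofReal (Δ' u v) := by
          apply MeasureTheory.lintegral_congr
          intro u
          rw [ENNReal.ofReal_mul (Lker_nonneg hα1 _)]
      _ = ENNReal.ofReal (Lker α (t - v)) * ∫⁻ u in Set.Ioo 0 v, ENNReal.ofReal (Δ' u v) :=
          MeasureTheory.lintegral_const_mul _ hmeasΔ
      _ ≤ ENNReal.ofReal (Lker α (t - v)) * ENNReal.ofReal (2 * h ^ α / (α * Real.Gamma α)) := by
          apply mul_le_mul_right
          refine le_trans (MeasureTheory.lintegral_mono_set Set.Ioo_subset_Ioc_self) ?_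
          exact inner_bound hα0 hα1 hh0 hv.1
  -- step 6 : compute the L integral
  have step6 : ∫⁻ v in Set.Ioc 0 t,
      ENNReal.ofReal (Lker α (t - v)) * ENNReal.ofReal (2 * h ^ α / (α * Real.Gamma α))
      ≤ ENNReal.ofReal (C * h ^ α) := by
    rw [MeasureTheory.lintegral_mul_const]
    · rw [lint_L hα0 hα1 ht0]
      rw [← ENNReal.ofReal_mul (by positivity)]
      apply ENNReal.ofReal_le_ofReal
      have htM : t ^ (1 - α) ≤ (max T 1) ^ (1 - α) :=
        Real.rpow_le_rpow ht0 (le_trans htT (le_max_left T 1)) h1α.le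
      have hle : t ^ (1 - α) / ((1 - α) * Real.Gamma (1 - α)) ≤ M := by
        rw [hMdef]
        exact (div_le_div_iff_of_pos_right (by positivity)).mpr htM
      calc t ^ (1 - α) / ((1 - α) * Real.Gamma (1 - α)) * (2 * h ^ α / (α * Real.Gamma α))
          ≤ M * (2 * h ^ α / (α * Real.Gamma α)) := by
            apply mul_le_mul_of_nonneg_right hle (by positivity)
        _ = C * h ^ α := by rw [hCdef]; ring
    · exact (Measurable.ennreal_ofReal
        (measurable_Lker.comp (measurable_const.sub measurable_id)))
  -- assemble
  have key : ∫⁻ u in Set.Ioc 0 t, ENNReal.ofReal |gh α h t u - 1| ≤ ENNReal.ofReal (C * h ^ α) :=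
    le_trans step1 (le_trans (le_of_eq step2) (le_trans (le_of_eq step3)
      (le_trans (le_of_eq step4) (le_trans step5 step6))))
  -- convert LHS
  rw [intervalIntegral.integral_of_le ht0]
  have hInt : IntegrableOn (fun u => |gh α h t u - 1|) (Set.Ioc 0 t) volume := by
    rwa [intervalIntegrable_iff_integrableOn_Ioc_of_le ht0] at hti
  rw [MeasureTheory.integral_eq_lintegral_of_nonneg_ae
    (Filter.Eventually.of_forall (fun u => abs_nonneg _)) hInt.aestronglyMeasurable]
  calc (∫⁻ u in Set.Ioc 0 t, ENNReal.ofReal |gh α h t u - 1|).toReal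
      ≤ (ENNReal.ofReal (C * h ^ α)).toReal :=
        ENNReal.toReal_mono ENNReal.ofReal_ne_top key
    _ = C * h ^ α := ENNReal.toReal_ofReal hCh
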